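/- Let c > 1 be a real number. Define ζ_c(x) = (c² − 1)·sech²((√3/2)·√((c² − 1)/c²)·x) and u_c = c·ζ_c/(1 + ζ_c). Then the functions ζ(t,x) := ζ_c(x − ct) and u(t,x) := u_c(x − ct), with h := 1 + ζ, satisfy for all (t,x) ∈ ℝ² both equations of the Serre–Green–Naghdi system: ∂tζ + ∂x(hu) = 0 and ∂t(u − (1/(3h))∂x(h³∂xu)) + ∂xζ + u∂xu = ∂x((u/(3h))∂x(h³∂xu) + (1/2)h²(∂xu)²). -/

import Mathlib

lemma my_sech_sq (x : ℝ) : (1 / Real.cosh x) ^ 2 = 1 - Real.tanh x ^ 2 := by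
  have hc := (Real.cosh_pos x).ne'
  rw [Real.tanh_eq_sinh_div_cosh]
  field_simp
  linear_combination -Real.cosh_sq_sub_sinh_sq x

lemma my_hasDerivAt_tanh (x : ℝ) : HasDerivAt Real.tanh (1 - Real.tanh x ^ 2) x := by
  have hc := (Real.cosh_pos x).ne'
  have h := (Real.hasDerivAt_sinh x).div (Real.hasDerivAt_cosh x) hc
  have hf : (Real.sinh / Real.cosh) = Real.tanh := by
    funext y; rw [Real.tanh_eq_sinh_div_cosh]; rfl
  rw [hf] at h
  convert h using 1
  · rfl
  · rfl
  rw [Real.tanh_eq_sinh_div_cosh]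
  field_simp

noncomputable section SGNAux

def sT (k s : ℝ) : ℝ := Real.tanh (k * s)
def sZ (c k s : ℝ) : ℝ := (c ^ 2 - 1) * (1 - sT k s ^ 2)
def sH (c k s : ℝ) : ℝ := 1 + (c ^ 2 - 1) * (1 - sT k s ^ 2)
def sU (c k s : ℝ) : ℝ := c * sZ c k s / (1 + sZ c k s)
def sDZ (c k s : ℝ) : ℝ := -2 * (c ^ 2 - 1) * k * sT k s * (1 - sT k s ^ 2)
def sDDZ (c k s : ℝ) : ℝ := -2 * (c ^ 2 - 1) * k ^ 2 * (1 - sT k s ^ 2) * (1 - 3 * sT k s ^ 2)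
def sD3Z (c k s : ℝ) : ℝ :=
  -2 * (c ^ 2 - 1) * k ^ 3 * (1 - sT k s ^ 2) * (12 * sT k s ^ 3 - 8 * sT k s)
def sDU (c k s : ℝ) : ℝ := c * sDZ c k s / sH c k s ^ 2
def sDDU (c k s : ℝ) : ℝ :=
  c * (sDDZ c k s * sH c k s - 2 * sDZ c k s ^ 2) / sH c k s ^ 3
def sG (c k s : ℝ) : ℝ := c * sDZ c k s * sH c k s
def sDG (c k s : ℝ) : ℝ := c * (sDDZ c k s * sH c k s + sDZ c k s ^ 2)
def sDDG (c k s : ℝ) : ℝ :=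
  c * (sD3Z c k s * sH c k s + sDDZ c k s * sDZ c k s + 2 * sDZ c k s * sDDZ c k s)
def sW (c k s : ℝ) : ℝ := sU c k s - 1 / (3 * sH c k s) * sDG c k s
def sDW (c k s : ℝ) : ℝ :=
  sDU c k s - (sDDG c k s * sH c k s - sDG c k s * sDZ c k s) / (3 * sH c k s ^ 2)
def sR (c k s : ℝ) : ℝ :=
  sU c k s / (3 * sH c k s) * sDG c k s + 1 / 2 * sH c k s ^ 2 * sDU c k s ^ 2
def sDR (c k s : ℝ) : ℝ :=
  (sDU c k s * sH c k s - sU c k s * sDZ c k s) / (3 * sH c k s ^ 2) * sDG c k s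
    + sU c k s * sDDG c k s / (3 * sH c k s)
    + sH c k s * sDZ c k s * sDU c k s ^ 2
    + sH c k s ^ 2 * sDU c k s * sDDU c k s

variable {c k : ℝ}

lemma sHpos (hc : 1 < c) (k s : ℝ) : 0 < sH c k s := by
  have h1 : (0:ℝ) ≤ 1 - sT k s ^ 2 := by
    rw [sT, ← my_sech_sq]; positivity
  have h2 : (0:ℝ) ≤ c ^ 2 - 1 := by nlinarith
  have : 0 ≤ (c ^ 2 - 1) * (1 - sT k s ^ 2) := mul_nonneg h2 h1
  rw [sH]; linarith

lemma sHZ (s : ℝ) : sH c k s = 1 + sZ c k s := by simp only [sH, sZ]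

lemma hT (s : ℝ) : HasDerivAt (sT k) (k * (1 - sT k s ^ 2)) s := by
  have h := (my_hasDerivAt_tanh (k * s)).comp s ((hasDerivAt_id s).const_mul k)
  simp only [Function.comp, mul_one] at h
  convert h using 1
  · rfl
  · rfl
  · rfl
  rw [sT]; ring

lemma hZ (s : ℝ) : HasDerivAt (sZ c k) (sDZ c k s) s := by
  have h := ((hT (k := k) s).pow 2).const_sub 1 |>.const_mul (c ^ 2 - 1)
  convert h using 1
  · rfl
  · rfl
  · rfl
  rw [sDZ]; ring

lemma hH (s : ℝ) : HasDerivAt (sH c k) (sDZ c k s) s := by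
  have h := (hZ (c := c) (k := k) s).const_add 1
  have hf : (fun s => 1 + sZ c k s) = sH c k := by
    funext y; rw [sHZ]
  rwa [hf] at h

lemma hDZ (s : ℝ) : HasDerivAt (sDZ c k) (sDDZ c k s) s := by
  have h := ((hT (k := k) s).mul (((hT (k := k) s).pow 2).const_sub 1)).const_mul
    (-2 * (c ^ 2 - 1) * k)
  convert h using 1
  · rfl
  · rfl
  · funext y; rw [sDZ]; simp only [Pi.mul_apply, Pi.pow_apply]; ring
  · rw [sDDZ]; simp only [Pi.mul_apply, Pi.pow_apply]; ring

lemma hDDZ (s : ℝ) : HasDerivAt (sDDZ c k) (sD3Z c k s) s := by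
  have h := ((((hT (k := k) s).pow 2).const_sub 1).mul
    ((((hT (k := k) s).pow 2).const_mul 3).const_sub 1)).const_mul (-2 * (c ^ 2 - 1) * k ^ 2)
  convert h using 1
  · rfl
  · rfl
  · funext y; rw [sDDZ]; simp only [Pi.mul_apply, Pi.pow_apply]; ring
  · rw [sD3Z]; simp only [Pi.mul_apply, Pi.pow_apply]; ring

lemma hU (hc : 1 < c) (s : ℝ) : HasDerivAt (sU c k) (sDU c k s) s := by
  have hpos : (0:ℝ) < 1 + sZ c k s := by rw [← sHZ]; exact sHpos hc k s
  have h := ((hZ (c := c) (k := k) s).const_mul c).div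
    ((hZ (c := c) (k := k) s).const_add 1) hpos.ne'
  convert h using 1
  · rfl
  · rfl
  · rfl
  rw [sDU, sHZ]
  congr 1
  ring

lemma hDU (hc : 1 < c) (s : ℝ) : HasDerivAt (sDU c k) (sDDU c k s) s := by
  have hpos := sHpos hc k s
  have hne : sH c k s ^ 2 ≠ 0 := by positivity
  have h := ((hDZ (c := c) (k := k) s).const_mul c).div ((hH (c := c) (k := k) s).pow 2) hne
  convert h using 1
  · rfl
  · rfl
  · rfl
  rw [sDDU]
  simp only [Pi.div_apply, Pi.pow_apply]
  have hne2 : sH c k s ≠ 0 := hpos.ne'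
  field_simp
  ring

lemma hG (s : ℝ) : HasDerivAt (sG c k) (sDG c k s) s := by
  have h := ((hDZ (c := c) (k := k) s).const_mul c).mul (hH (c := c) (k := k) s)
  convert h using 1
  · rfl
  · rfl
  · rfl
  rw [sDG]; ring

lemma hDG (s : ℝ) : HasDerivAt (sDG c k) (sDDG c k s) s := by
  have h := (((hDDZ (c := c) (k := k) s).mul (hH (c := c) (k := k) s)).add
    ((hDZ (c := c) (k := k) s).pow 2)).const_mul c
  convert h using 1
  · rfl
  · rfl
  · rfl
  rw [sDDG]; ring

lemma hW (hc : 1 < c) (s : ℝ) : HasDerivAt (sW c k) (sDW c k s) s := by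
  have hpos := sHpos hc k s
  have hne : 3 * sH c k s ≠ 0 := by positivity
  have h := (hU (k := k) hc s).sub
    ((((hasDerivAt_const s (1:ℝ)).div ((hH (c := c) (k := k) s).const_mul 3) hne)).mul
      (hDG (c := c) (k := k) s))
  convert h using 1
  · rfl
  · rfl
  · rfl
  rw [sDW]
  simp only [Pi.div_apply, Pi.pow_apply]
  have hne2 : sH c k s ≠ 0 := hpos.ne'
  field_simp
  ring

lemma hR (hc : 1 < c) (s : ℝ) : HasDerivAt (sR c k) (sDR c k s) s := by
  have hpos := sHpos hc k s
  have hne : 3 * sH c k s ≠ 0 := by positivity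
  have h := (((hU (k := k) hc s).div ((hH (c := c) (k := k) s).const_mul 3) hne).mul
      (hDG (c := c) (k := k) s)).add
    ((((hH (c := c) (k := k) s).pow 2).const_mul (1/2 : ℝ)).mul ((hDU (k := k) hc s).pow 2))
  convert h using 1
  · rfl
  · rfl
  · rfl
  rw [sDR]
  simp only [Pi.div_apply, Pi.pow_apply]
  have hne2 : sH c k s ≠ 0 := hpos.ne'
  field_simp
  ring

lemma comp_sub {F : ℝ → ℝ} {d b x : ℝ} (hF : HasDerivAt F d (x - b)) :
    HasDerivAt (fun x' => F (x' - b)) d x := by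
  have h := hF.comp x ((hasDerivAt_id x).sub_const b)
  simp at h
  exact h

lemma comp_t {F : ℝ → ℝ} {d cc t x : ℝ} (hF : HasDerivAt F d (x - cc * t)) :
    HasDerivAt (fun t' => F (x - cc * t')) (-cc * d) t := by
  have h := hF.comp t (((hasDerivAt_id t).const_mul cc).const_sub x)
  simp only [Function.comp, mul_one] at h
  convert h using 1
  · rfl
  · rfl
  · rfl
  ring

set_option maxHeartbeats 4000000 in
set_option maxRecDepth 100000 in
lemma main_ode (hc : 1 < c) (hk : 4 * c ^ 2 * k ^ 2 = 3 * (c ^ 2 - 1)) (s : ℝ) :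
    -c * sDW c k s + sDZ c k s + sU c k s * sDU c k s = sDR c k s := by
  have hpos := sHpos hc k s
  simp only [sDW, sDR, sDU, sDDU, sDG, sDDG, sDZ, sDDZ, sD3Z, sU, sW, sZ, sH] at *
  set τ := sT k s with hτ
  have hne : 1 + (c ^ 2 - 1) * (1 - τ ^ 2) ≠ 0 := by linarith
  have hc0 : c ≠ 0 := by nlinarith
  field_simp
  linear_combination ((1 : ℝ) * c ^ 0 * k ^ 1 * τ ^ 7 + (-1 : ℝ) * c ^ 0 * k ^ 1 * τ ^ 9 + (-1 : ℝ) * c ^ 2 * k ^ 1 * τ ^ 1 + (1 : ℝ) * c ^ 2 * k ^ 1 * τ ^ 3 + (3 : ℝ) * c ^ 2 * k ^ 1 * τ ^ 5 + (-6 : ℝ) * c ^ 2 * k ^ 1 * τ ^ 7 + (3 : ℝ) * c ^ 2 * k ^ 1 * τ ^ 9 + (3 : ℝ) * c ^ 4 * k ^ 1 * τ ^ 3 + (-9 : ℝ) * c ^ 4 * k ^ 1 * τ ^ 5 + (9 : ℝ) * c ^ 4 * k ^ 1 * τ ^ 7 + (-3 : ℝ) * c ^ 4 * k ^ 1 * τ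 ^ 9 + (1 : ℝ) * c ^ 6 * k ^ 1 * τ ^ 1 + (-4 : ℝ) * c ^ 6 * k ^ 1 * τ ^ 3 + (6 : ℝ) * c ^ 6 * k ^ 1 * τ ^ 5 + (-4 : ℝ) * c ^ 6 * k ^ 1 * τ ^ 7 + (1 : ℝ) * c ^ 6 * k ^ 1 * τ ^ 9) * hk

end SGNAux

/-- The explicit solitary wave of the Serre-Green-Naghdi equations: for `c > 1`,
`ζ(t,x) = ζ_c(x − ct)` and `u(t,x) = u_c(x − ct)`, with
`ζ_c(x) = (c² − 1) sech²((√3/2) √((c²−1)/c²) x)` and `u_c = c ζ_c/(1 + ζ_c)`,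
satisfy both equations of the SGN system (units with `g = d = 1`, `h = 1 + ζ`). -/
theorem sgn_explicit_solitary_wave_solves_SGN (c : ℝ) (hc : 1 < c)
    (ζc uc : ℝ → ℝ)
    (hζc : ζc = fun x : ℝ =>
      (c ^ 2 - 1) * (1 / Real.cosh ((Real.sqrt 3 / 2) * Real.sqrt ((c ^ 2 - 1) / c ^ 2) * x)) ^ 2)
    (huc : uc = fun x => c * ζc x / (1 + ζc x))
    (ζ u h : ℝ → ℝ → ℝ)
    (hζ : ζ = fun t x => ζc (x - c * t))
    (hu : u = fun t x => uc (x - c * t))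
    (hh : h = fun t x => 1 + ζ t x) :
    ∀ t x : ℝ,
      (deriv (fun t' => ζ t' x) t + deriv (fun x' => h t x' * u t x') x = 0) ∧
      (deriv (fun t' => u t' x
            - (1 / (3 * h t' x)) * deriv (fun x' => (h t' x') ^ 3 * deriv (fun y => u t' y) x') x) t
          + deriv (fun x' => ζ t x') x + u t x * deriv (fun x' => u t x') x
        = deriv (fun x' =>
            (u t x' / (3 * h t x')) * deriv (fun y => (h t y) ^ 3 * deriv (fun z => u t z) y) x'
              + (1 / 2) * (h t x') ^ 2 * (deriv (fun z => u t z) x') ^ 2) x) := by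
  have hc0 : (0:ℝ) < c := lt_trans one_pos hc
  set K : ℝ := Real.sqrt 3 / 2 * Real.sqrt ((c ^ 2 - 1) / c ^ 2) with hK
  have hcsq : (0:ℝ) ≤ c ^ 2 - 1 := by nlinarith
  have hk2 : 4 * c ^ 2 * K ^ 2 = 3 * (c ^ 2 - 1) := by
    have h3 : Real.sqrt 3 ^ 2 = 3 := Real.sq_sqrt (by norm_num)
    have hcc : Real.sqrt ((c ^ 2 - 1) / c ^ 2) ^ 2 = (c ^ 2 - 1) / c ^ 2 :=
      Real.sq_sqrt (div_nonneg hcsq (sq_nonneg c))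
    have hKsq : K ^ 2 = 3 / 4 * ((c ^ 2 - 1) / c ^ 2) := by
      rw [hK, mul_pow, div_pow, h3, hcc]; ring
    rw [hKsq]
    field_simp
  have hζfun : ζ = fun t x => sZ c K (x - c * t) := by
    rw [hζ, hζc]; funext t x
    simp only [sZ, sT, ← my_sech_sq]
  have hufun : u = fun t x => sU c K (x - c * t) := by
    rw [hu, huc, hζc]; funext t x
    simp only [sU, sZ, sT, ← my_sech_sq]
  have hhfun : h = fun t x => sH c K (x - c * t) := by
    rw [hh, hζfun]; funext t x
    simp only [sH, sZ]
  intro t x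
  rw [hζfun, hufun, hhfun]
  simp only []
  have hinner : ∀ b : ℝ, (fun x' : ℝ =>
      sH c K (x' - b) ^ 3 * deriv (fun y => sU c K (y - b)) x') =
      (fun x' : ℝ => sG c K (x' - b)) := by
    intro b; funext x'
    have hd : deriv (fun y => sU c K (y - b)) x' = sDU c K (x' - b) :=
      (comp_sub (hU hc _)).deriv
    rw [hd, sG, sDU]
    have hpos := sHpos hc K (x' - b)
    field_simp
  have hG2 : ∀ b x' : ℝ, deriv (fun y => sG c K (y - b)) x' = sDG c K (x' - b) :=
    fun b x' => (comp_sub (hG _)).deriv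
  constructor
  · have d1 : deriv (fun t' => sZ c K (x - c * t')) t = -c * sDZ c K (x - c * t) :=
      (comp_t (hZ _)).deriv
    have hprod : (fun x' : ℝ => sH c K (x' - c * t) * sU c K (x' - c * t)) =
        (fun x' : ℝ => c * sZ c K (x' - c * t)) := by
      funext x'
      have hpos := sHpos hc K (x' - c * t)
      rw [sHZ] at hpos
      rw [sU, sHZ]
      field_simp
    have d2 : deriv (fun x' => sH c K (x' - c * t) * sU c K (x' - c * t)) x
        = c * sDZ c K (x - c * t) := by
      rw [hprod]; exact (comp_sub ((hZ _).const_mul c)).deriv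
    rw [d1, d2]; ring
  · have hWfun : (fun t' => sU c K (x - c * t')
        - 1 / (3 * sH c K (x - c * t')) *
          deriv (fun x' => sH c K (x' - c * t') ^ 3 * deriv (fun y => sU c K (y - c * t')) x') x)
        = (fun t' => sW c K (x - c * t')) := by
      funext t'
      rw [hinner (c * t'), hG2, sW]
    rw [hWfun]
    have dW : deriv (fun t' => sW c K (x - c * t')) t = -c * sDW c K (x - c * t) :=
      (comp_t (hW hc _)).deriv
    have dZx : deriv (fun x' => sZ c K (x' - c * t)) x = sDZ c K (x - c * t) :=
      (comp_sub (hZ _)).deriv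
    have dUx : deriv (fun x' => sU c K (x' - c * t)) x = sDU c K (x - c * t) :=
      (comp_sub (hU hc _)).deriv
    have hRfun : (fun x' => sU c K (x' - c * t) / (3 * sH c K (x' - c * t)) *
          deriv (fun y => sH c K (y - c * t) ^ 3 * deriv (fun z => sU c K (z - c * t)) y) x'
        + 1 / 2 * sH c K (x' - c * t) ^ 2 * (deriv (fun z => sU c K (z - c * t)) x') ^ 2)
        = (fun x' => sR c K (x' - c * t)) := by
      funext x'
      rw [hinner (c * t), hG2, (comp_sub (hU hc _)).deriv, sR]
    rw [hRfun, dW, dZx, dUx, (comp_sub (hR hc _)).deriv]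
    exact main_ode hc hk2 _
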